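/- Let x₀ ∈ X, g̃ ∈ ℝ^n and α > 0, and let x⁺ be a minimizer over x ∈ X of ⟨g̃, x − x₀⟩ + (1/α) D_R(x, x₀). Then for every x ∈ X, D_R(x, x⁺) ≤ D_R(x, x₀) + α ⟨g̃, x − x₀⟩ + (α² / (2 σ_R)) ‖g̃‖*². -/

import Mathlib

set_option autoImplicit false

open MeasureTheory Filter
open scoped RealInnerProductSpace ENNReal

noncomputable section

/-- `ℝ^n` with the standard inner product. -/
abbrev E (n : ℕ) := EuclideanSpace ℝ (Fin n)

/-- `N` is a norm on `ℝ^n` (possibly different from the Euclidean one). -/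
def IsNormFn {n : ℕ} (N : E n → ℝ) : Prop :=
  (∀ x, 0 ≤ N x) ∧ (∀ x, N x = 0 ↔ x = 0) ∧
  (∀ (a : ℝ) (x : E n), N (a • x) = |a| * N x) ∧
  (∀ x y, N (x + y) ≤ N x + N y)

/-- The dual norm `‖x‖* = sup {⟨x,y⟩ : ‖y‖ ≤ 1}` of the norm `N`. -/
def dualNorm {n : ℕ} (N : E n → ℝ) (x : E n) : ℝ :=
  sSup ((fun y => ⟪x, y⟫) '' {y | N y ≤ 1})

/-- The Bregman divergence `D_R(x,y) = R(x) − R(y) − ⟨∇R(y), x − y⟩`. -/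
def bregman {n : ℕ} (R : E n → ℝ) (x y : E n) : ℝ :=
  R x - R y - ⟪gradient R y, x - y⟫

/-- `g` is a subgradient of `f` at `x`. -/
def IsSubgradientAt {n : ℕ} (f : E n → ℝ) (g x : E n) : Prop :=
  ∀ y, f x + ⟪g, y - x⟫ ≤ f y

/-- `R` is `σ`-strongly convex on `S` with respect to the norm `N`. -/
def StrongConvexOnWith {n : ℕ} (S : Set (E n)) (σ : ℝ) (N : E n → ℝ) (R : E n → ℝ) : Prop :=
  ∀ ⦃x⦄, x ∈ S → ∀ ⦃y⦄, y ∈ S → ∀ ⦃t : ℝ⦄, 0 ≤ t → t ≤ 1 →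
    R (t • x + (1 - t) • y) ≤ t * R x + (1 - t) * R y - σ / 2 * t * (1 - t) * (N (x - y)) ^ 2

/-! ### Auxiliary lemmas -/

lemma IsNormFn.zero {n : ℕ} {N : E n → ℝ} (hN : IsNormFn N) : N 0 = 0 :=
  (hN.2.1 0).mpr rfl

lemma IsNormFn.neg_eq {n : ℕ} {N : E n → ℝ} (hN : IsNormFn N) (x : E n) : N (-x) = N x := by
  have := hN.2.2.1 (-1) x
  simpa using this

/-- Coordinate bound in Euclidean space. -/
lemma abs_coord_le_norm {n : ℕ} (x : E n) (i : Fin n) : |x i| ≤ ‖x‖ := by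
  have h := abs_real_inner_le_norm (EuclideanSpace.single i (1:ℝ)) x
  rw [EuclideanSpace.inner_single_left, EuclideanSpace.norm_single] at h
  simpa using h

/-- Upper bound: `N x ≤ C * ‖x‖`. -/
lemma IsNormFn.exists_upper {n : ℕ} {N : E n → ℝ} (hN : IsNormFn N) :
    ∃ C : ℝ, 0 ≤ C ∧ ∀ x, N x ≤ C * ‖x‖ := by
  refine ⟨∑ i, N (EuclideanSpace.single i (1:ℝ)), Finset.sum_nonneg fun i _ => hN.1 _, fun x => ?_⟩
  have hx : x = ∑ i, x i • EuclideanSpace.single i (1:ℝ) := by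
    have h := (EuclideanSpace.basisFun (Fin n) ℝ).sum_repr x
    simp only [EuclideanSpace.basisFun_repr, EuclideanSpace.basisFun_apply] at h
    exact h.symm
  calc N x = N (∑ i, x i • EuclideanSpace.single i (1:ℝ)) := by rw [← hx]
    _ ≤ ∑ i, N (x i • EuclideanSpace.single i (1:ℝ)) := by
        refine Finset.le_sum_of_subadditive N hN.zero.le hN.2.2.2 _ _
    _ = ∑ i, |x i| * N (EuclideanSpace.single i (1:ℝ)) := by
        simp [hN.2.2.1]
    _ ≤ ∑ i, ‖x‖ * N (EuclideanSpace.single i (1:ℝ)) := by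
        refine Finset.sum_le_sum fun i _ => ?_
        exact mul_le_mul_of_nonneg_right (abs_coord_le_norm x i) (hN.1 _)
    _ = (∑ i, N (EuclideanSpace.single i (1:ℝ))) * ‖x‖ := by
        rw [Finset.sum_mul]
        exact Finset.sum_congr rfl fun i _ => mul_comm _ _

lemma IsNormFn.continuous {n : ℕ} {N : E n → ℝ} (hN : IsNormFn N) : Continuous N := by
  obtain ⟨C, hC0, hC⟩ := hN.exists_upper
  have key : ∀ x y : E n, |N x - N y| ≤ C * ‖x - y‖ := by
    intro x y
    rw [abs_sub_le_iff]
    constructor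
    · have := hN.2.2.2 (x - y) y
      simp only [sub_add_cancel] at this
      linarith [hC (x - y)]
    · have := hN.2.2.2 (y - x) x
      simp only [sub_add_cancel] at this
      have h2 := hC (y - x)
      rw [norm_sub_rev] at h2
      linarith
  have : LipschitzWith C.toNNReal N := by
    refine LipschitzWith.of_dist_le_mul fun x y => ?_
    rw [Real.dist_eq, dist_eq_norm, Real.coe_toNNReal _ hC0]
    exact key x y
  exact this.continuous

/-- Lower bound: `c * ‖x‖ ≤ N x` for some `c > 0`. -/
lemma IsNormFn.exists_lower {n : ℕ} {N : E n → ℝ} (hN : IsNormFn N) :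
    ∃ c : ℝ, 0 < c ∧ ∀ x, c * ‖x‖ ≤ N x := by
  by_cases hn : ∀ x : E n, x = 0
  · exact ⟨1, one_pos, fun x => by rw [hn x]; simp [hN.zero]⟩
  push_neg at hn
  obtain ⟨z, hz⟩ := hn
  have hsph : (Metric.sphere (0 : E n) 1).Nonempty :=
    ⟨‖z‖⁻¹ • z, by
      simp only [Metric.mem_sphere, dist_zero_right, norm_smul, norm_inv, norm_norm]
      exact inv_mul_cancel₀ (norm_ne_zero_iff.mpr hz)⟩
  obtain ⟨w, hw, hwmin⟩ := (isCompact_sphere (0 : E n) 1).exists_isMinOn hsph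
    hN.continuous.continuousOn
  have hw0 : w ≠ 0 := by
    intro h; rw [h] at hw; simp at hw
  have hc : 0 < N w := lt_of_le_of_ne (hN.1 w) (fun h => hw0 ((hN.2.1 w).mp h.symm))
  refine ⟨N w, hc, fun x => ?_⟩
  rcases eq_or_ne x 0 with rfl | hx
  · simp [hN.zero]
  have hxpos0 : (0:ℝ) < ‖x‖ := norm_pos_iff.mpr hx
  have hmem : ‖x‖⁻¹ • x ∈ Metric.sphere (0 : E n) 1 := by
    simp only [Metric.mem_sphere, dist_zero_right, norm_smul, norm_inv, norm_norm]
    exact inv_mul_cancel₀ (norm_ne_zero_iff.mpr hx)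
  have this : N w ≤ N (‖x‖⁻¹ • x) := hwmin hmem
  have hNx : N (‖x‖⁻¹ • x) = ‖x‖⁻¹ * N x := by
    rw [hN.2.2.1]; congr 1; rw [abs_of_nonneg (by positivity)]
  rw [hNx] at this
  have hxpos : (0:ℝ) < ‖x‖ := norm_pos_iff.mpr hx
  calc N w * ‖x‖ ≤ (‖x‖⁻¹ * N x) * ‖x‖ := by
        exact mul_le_mul_of_nonneg_right this hxpos.le
    _ = N x := by field_simp

/-- The constraint set of the dual norm sup is bounded for the pairing. -/
lemma dualNorm_bddAbove {n : ℕ} {N : E n → ℝ} (hN : IsNormFn N) (g : E n) :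
    BddAbove ((fun y => ⟪g, y⟫) '' {y | N y ≤ 1}) := by
  obtain ⟨c, hc, hcl⟩ := hN.exists_lower
  refine ⟨‖g‖ * c⁻¹, fun r hr => ?_⟩
  obtain ⟨y, hy, rfl⟩ := hr
  have h1 : ‖y‖ ≤ c⁻¹ := by
    have h2 : c * ‖y‖ ≤ 1 := le_trans (hcl y) hy
    rw [← mul_le_mul_iff_right₀ hc]
    calc c * ‖y‖ ≤ 1 := h2
      _ = c * c⁻¹ := by field_simp
  calc ⟪g, y⟫ ≤ ‖g‖ * ‖y‖ := real_inner_le_norm g y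
    _ ≤ ‖g‖ * c⁻¹ := by
        exact mul_le_mul_of_nonneg_left h1 (norm_nonneg g)

lemma dualNorm_nonneg {n : ℕ} {N : E n → ℝ} (hN : IsNormFn N) (g : E n) :
    0 ≤ dualNorm N g := by
  have h0 : (0:ℝ) ∈ (fun y => ⟪g, y⟫) '' {y | N y ≤ 1} :=
    ⟨0, by simp [hN.zero], by simp⟩
  exact le_csSup (dualNorm_bddAbove hN g) h0

lemma inner_le_dualNorm_mul {n : ℕ} {N : E n → ℝ} (hN : IsNormFn N) (g z : E n) :
    ⟪g, z⟫ ≤ dualNorm N g * N z := by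
  rcases eq_or_ne z 0 with rfl | hz
  · simp [hN.zero]
  have hNz : 0 < N z :=
    lt_of_le_of_ne (hN.1 z) fun h => hz ((hN.2.1 z).mp h.symm)
  have hmem : ((N z)⁻¹ • z) ∈ {y | N y ≤ 1} := by
    have : N ((N z)⁻¹ • z) = (N z)⁻¹ * N z := by
      rw [hN.2.2.1, abs_of_nonneg (by positivity)]
    simp only [Set.mem_setOf_eq, this, inv_mul_cancel₀ hNz.ne']
    exact le_refl 1
  have h1 : ⟪g, (N z)⁻¹ • z⟫ ≤ dualNorm N g :=
    le_csSup (dualNorm_bddAbove hN g) ⟨_, hmem, rfl⟩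
  rw [real_inner_smul_right] at h1
  calc ⟪g, z⟫ = ((N z)⁻¹ * ⟪g, z⟫) * N z := by field_simp
    _ ≤ dualNorm N g * N z := mul_le_mul_of_nonneg_right h1 hNz.le

/-- Derivative of a function along a line. -/
lemma hasDerivAt_line {n : ℕ} {f : E n → ℝ} {p : E n} (v : E n)
    (hf : DifferentiableAt ℝ f p) :
    HasDerivAt (fun t : ℝ => f (p + t • v)) ⟪gradient f p, v⟫ 0 := by
  have h1 : HasDerivAt (fun t : ℝ => p + t • v) v 0 := by
    simpa using ((hasDerivAt_id (0:ℝ)).smul_const v).const_add p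
  have h2 : HasGradientAt f (gradient f p) p := hf.hasGradientAt
  rw [hasGradientAt_iff_hasFDerivAt] at h2
  have h2' : HasFDerivAt f ((InnerProductSpace.toDual ℝ (E n)) (gradient f p))
      (p + (0:ℝ) • v) := by simpa using h2
  have h3 := h2'.comp_hasDerivAt 0 h1
  simpa [Function.comp_def, InnerProductSpace.toDual_apply_apply] using h3

/-- If `h` has derivative `d` at `0` and `h 0 ≤ h t` on `(0,1]`, then `0 ≤ d`. -/
lemma deriv_nonneg_of_isMinOn {h : ℝ → ℝ} {d : ℝ} (hd : HasDerivAt h d 0)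
    (hmin : ∀ t ∈ Set.Ioc (0:ℝ) 1, h 0 ≤ h t) : 0 ≤ d := by
  have hs := hasDerivAt_iff_tendsto_slope.mp hd
  have hs' : Tendsto (slope h 0) (nhdsWithin 0 (Set.Ioi 0)) (nhds d) :=
    hs.mono_left (nhdsWithin_mono 0 fun t ht => ne_of_gt ht)
  refine ge_of_tendsto hs' ?_
  filter_upwards [Ioc_mem_nhdsGT_of_mem (Set.mem_Ico.mpr ⟨le_refl 0, one_pos⟩)] with t ht
  have := hmin t ht
  have ht0 : 0 < t := ht.1
  have : (0:ℝ) ≤ (h t - h 0) / (t - 0) := by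
    apply div_nonneg (by linarith) (by linarith)
  simpa [slope_def_field] using this

/-- Strong convexity implies the Bregman divergence lower bound. -/
lemma bregman_lower {n : ℕ} {N : E n → ℝ} {U : Set (E n)} {R : E n → ℝ} {σR : ℝ}
    (hRdiff : ∀ x ∈ U, DifferentiableAt ℝ R x)
    (hRsc : StrongConvexOnWith U σR N R)
    {x y : E n} (hx : x ∈ U) (hy : y ∈ U) :
    σR / 2 * (N (x - y)) ^ 2 ≤ bregman R x y := by
  set A := (N (x - y)) ^ 2 with hA
  have hd : HasDerivAt (fun t : ℝ => R (y + t • (x - y))) ⟪gradient R y, x - y⟫ 0 :=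
    hasDerivAt_line _ (hRdiff y hy)
  have hs : Tendsto (slope (fun t : ℝ => R (y + t • (x - y))) 0)
      (nhdsWithin 0 (Set.Ioi 0)) (nhds ⟪gradient R y, x - y⟫) :=
    (hasDerivAt_iff_tendsto_slope.mp hd).mono_left
      (nhdsWithin_mono 0 fun t ht => ne_of_gt ht)
  have hg : Tendsto (fun t : ℝ => R x - R y - σR / 2 * (1 - t) * A)
      (nhdsWithin 0 (Set.Ioi 0)) (nhds (R x - R y - σR / 2 * A)) := by
    have hcont : Continuous (fun t : ℝ => R x - R y - σR / 2 * (1 - t) * A) := by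
      continuity
    have := (hcont.tendsto 0).mono_left (nhdsWithin_le_nhds (s := Set.Ioi (0:ℝ)))
    simpa using this
  have key : ⟪gradient R y, x - y⟫ ≤ R x - R y - σR / 2 * A := by
    refine le_of_tendsto_of_tendsto hs hg ?_
    filter_upwards [Ioc_mem_nhdsGT_of_mem (Set.mem_Ico.mpr ⟨le_refl 0, one_pos⟩)] with t ht
    have heq : y + t • (x - y) = t • x + (1 - t) • y := by module
    have hft : R (y + t • (x - y)) ≤ t * R x + (1 - t) * R y - σR / 2 * t * (1 - t) * A := by
      rw [heq]; exact hRsc hx hy ht.1.le ht.2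
    rw [slope_def_field]
    simp only [sub_zero, zero_smul, add_zero]
    rw [div_le_iff₀ ht.1]
    nlinarith [hft]
  have hb : bregman R x y = R x - R y - ⟪gradient R y, x - y⟫ := rfl
  rw [hb]; linarith

theorem smd_bregman_descent_inequality
    {n : ℕ}
    (N : E n → ℝ) (hN : IsNormFn N)
    (𝒳 : Set (E n)) (hXconv : Convex ℝ 𝒳) (hXcomp : IsCompact 𝒳)
    (R : E n → ℝ) (U : Set (E n)) (hUopen : IsOpen U) (hXU : 𝒳 ⊆ U)
    (hRdiff : ∀ x ∈ U, DifferentiableAt ℝ R x)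
    (σR : ℝ) (hσR : 0 < σR) (hRsc : StrongConvexOnWith U σR N R)
    (x₀ : E n) (hx₀ : x₀ ∈ 𝒳) (gv : E n) (α : ℝ) (hα : 0 < α)
    (xp : E n) (hxp : xp ∈ 𝒳)
    (hmin : ∀ y ∈ 𝒳, ⟪gv, xp - x₀⟫ + (1 / α) * bregman R xp x₀ ≤
      ⟪gv, y - x₀⟫ + (1 / α) * bregman R y x₀) :
    ∀ x ∈ 𝒳, bregman R x xp ≤
      bregman R x x₀ + α * ⟪gv, x - x₀⟫ + α ^ 2 / (2 * σR) * (dualNorm N gv) ^ 2 := by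
  intro x hx
  set v := x - xp with hv
  -- derivative of an affine inner-product term along the line
  have hlin : ∀ (c w : E n), HasDerivAt (fun t : ℝ => ⟪c, (xp + t • v) - w⟫) ⟪c, v⟫ 0 := by
    intro c w
    have heq : (fun t : ℝ => ⟪c, (xp + t • v) - w⟫)
        = fun t : ℝ => ⟪c, xp - w⟫ + t * ⟪c, v⟫ := by
      funext t
      rw [show (xp + t • v) - w = (xp - w) + t • v by abel, inner_add_right,
        real_inner_smul_right]
    rw [heq]
    simpa using (hasDerivAt_mul_const (x := (0:ℝ)) ⟪c, v⟫).const_add ⟪c, xp - w⟫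
  have hR1 : HasDerivAt (fun t : ℝ => R (xp + t • v)) ⟪gradient R xp, v⟫ 0 :=
    hasDerivAt_line v (hRdiff xp (hXU hxp))
  set D : ℝ := ⟪gv, v⟫ + (1 / α) * (⟪gradient R xp, v⟫ - ⟪gradient R x₀, v⟫) with hD
  have hφ : HasDerivAt
      (fun t : ℝ => ⟪gv, (xp + t • v) - x₀⟫ + (1 / α) * bregman R (xp + t • v) x₀) D 0 := by
    have h2 : HasDerivAt (fun t : ℝ => bregman R (xp + t • v) x₀)
        (⟪gradient R xp, v⟫ - ⟪gradient R x₀, v⟫) 0 :=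
      (hR1.sub_const (R x₀)).sub (hlin (gradient R x₀) x₀)
    exact (hlin gv x₀).add (h2.const_mul (1 / α))
  have hD0 : 0 ≤ D := by
    refine deriv_nonneg_of_isMinOn hφ ?_
    intro t ht
    have hmem : xp + t • v ∈ 𝒳 := by
      have heq : xp + t • v = t • x + (1 - t) • xp := by rw [hv]; module
      rw [heq]
      exact hXconv hx hxp ht.1.le (by linarith [ht.2]) (by ring)
    have h := hmin _ hmem
    simpa using h
  -- multiply optimality by α
  have hkey : ⟪gradient R x₀, v⟫ - ⟪gradient R xp, v⟫ ≤ α * ⟪gv, v⟫ := by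
    have h := mul_le_mul_of_nonneg_left hD0 hα.le
    rw [mul_zero] at h
    have heq : α * D = α * ⟪gv, v⟫ + (⟪gradient R xp, v⟫ - ⟪gradient R x₀, v⟫) := by
      rw [hD]; field_simp
    rw [heq] at h
    linarith
  -- three-point identity
  have h3 : bregman R x xp = bregman R x x₀ - bregman R xp x₀
      + (⟪gradient R x₀, v⟫ - ⟪gradient R xp, v⟫) := by
    simp only [bregman, hv, inner_sub_right]
    ring
  -- inner product split
  have hsplit : α * ⟪gv, v⟫ = α * ⟪gv, x - x₀⟫ + α * ⟪gv, x₀ - xp⟫ := by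
    have : ⟪gv, v⟫ = ⟪gv, x - x₀⟫ + ⟪gv, x₀ - xp⟫ := by
      simp only [hv, inner_sub_right]; ring
    rw [this]; ring
  -- dual-norm bound
  have hdual : ⟪gv, x₀ - xp⟫ ≤ dualNorm N gv * N (x₀ - xp) :=
    inner_le_dualNorm_mul hN gv _
  have hmul : α * ⟪gv, x₀ - xp⟫ ≤ α * (dualNorm N gv * N (x₀ - xp)) :=
    mul_le_mul_of_nonneg_left hdual hα.le
  -- strong convexity bound
  have hbl : σR / 2 * (N (x₀ - xp)) ^ 2 ≤ bregman R xp x₀ := by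
    have h := bregman_lower hRdiff hRsc (hXU hxp) (hXU hx₀)
    have heq : N (xp - x₀) = N (x₀ - xp) := by
      rw [show xp - x₀ = -(x₀ - xp) from (neg_sub x₀ xp).symm, hN.neg_eq]
    rwa [heq] at h
  -- quadratic bound
  set A := N (x₀ - xp) with hA
  set G := dualNorm N gv with hG
  have hGpos : 0 ≤ G := dualNorm_nonneg hN gv
  have hApos : 0 ≤ A := hN.1 _
  have hquad : α * (G * A) - σR / 2 * A ^ 2 ≤ α ^ 2 / (2 * σR) * G ^ 2 := by
    rw [show α ^ 2 / (2 * σR) * G ^ 2 = α ^ 2 * G ^ 2 / (2 * σR) by ring,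
      le_div_iff₀ (by positivity)]
    nlinarith [sq_nonneg (σR * A - α * G)]
  linarith [h3, hkey, hsplit, hmul, hbl, hquad]
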